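/- Let n, w be positive integers, G an n-vertex graph, W ⊆ V(G) with |W| = w, and d ≥ 1 a real. Suppose δ(G) ≥ n − w/(8d) and p ≥ 500·d·log n / w. Then with probability at least 1 − n^{−7}, the p-random subgraph G_p of G satisfies: (E1) |N_{G_p}(X, W)| ≥ d|X| for all X ⊆ V(G) with 1 ≤ |X| < w/(2d), and (E2) e_{G_p}(X, Y) > 0 for all disjoint X, Y ⊆ V(G) with |X|, |Y| ≥ w/(2d). -/

import Mathlib

open MeasureTheory

set_option maxHeartbeats 1000000

section Helpers

lemma cyl_measure {V : Type*} [Fintype V] [DecidableEq V] (p : ℝ) (hp0 : 0 ≤ p)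
    (hp1 : Real.toNNReal p ≤ 1) (E₀ : Finset (Sym2 V)) :
    (Measure.pi fun _ : Sym2 V => (PMF.bernoulli (Real.toNNReal p) hp1).toMeasure)
      {f : Sym2 V → Bool | ∀ e ∈ E₀, f e = false}
      ≤ ENNReal.ofReal (Real.exp (-(p * E₀.card))) := by
  have hset : {f : Sym2 V → Bool | ∀ e ∈ E₀, f e = false}
      = Set.pi Set.univ (fun e => if e ∈ E₀ then {false} else Set.univ) := by
    ext f
    simp only [Set.mem_setOf_eq, Set.mem_pi, Set.mem_univ, forall_true_left]
    constructor
    · intro h e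
      by_cases he : e ∈ E₀ <;> simp [he, h]
    · intro h e he
      have := h e
      simp [he] at this
      exact this
  rw [hset, Measure.pi_pi]
  have hfac : ∀ e : Sym2 V,
      (PMF.bernoulli (Real.toNNReal p) hp1).toMeasure (if e ∈ E₀ then {false} else Set.univ)
      = if e ∈ E₀ then (1 - ENNReal.ofReal p) else 1 := by
    intro e
    by_cases he : e ∈ E₀ <;> simp only [he, if_true, if_false]
    · rw [PMF.toMeasure_apply_singleton _ _ (measurableSet_singleton _)]
      rw [PMF.bernoulli_apply]
      simp [ENNReal.coe_sub, ENNReal.ofReal]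
    · simp [add_tsub_cancel_of_le hp1]
      simp only [PMF.bernoulli_apply, cond_true, cond_false]
      rw [← ENNReal.coe_add, add_tsub_cancel_of_le hp1, ENNReal.coe_one]
  simp only [hfac]
  rw [Finset.prod_ite_mem, Finset.univ_inter, Finset.prod_const]
  calc (1 - ENNReal.ofReal p) ^ E₀.card
      ≤ ENNReal.ofReal (Real.exp (-p)) ^ E₀.card := by
        refine pow_le_pow_left' ?_ _
        rw [← ENNReal.ofReal_one, ← ENNReal.ofReal_sub _ hp0]
        exact ENNReal.ofReal_le_ofReal (by linarith [Real.add_one_le_exp (-p)])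
    _ = ENNReal.ofReal (Real.exp (-(p * E₀.card))) := by
        rw [← ENNReal.ofReal_pow (Real.exp_nonneg _), ← Real.exp_nat_mul]
        ring_nf

lemma adj_char {V : Type*} (G : SimpleGraph V) (f : Sym2 V → Bool) (x y : V) :
    (G ⊓ SimpleGraph.fromEdgeSet {e | f e = true}).Adj x y ↔ G.Adj x y ∧ f s(x, y) = true := by
  constructor
  · rintro ⟨h1, h2, -⟩; exact ⟨h1, h2⟩
  · rintro ⟨h1, h2⟩; exact ⟨h1, h2, G.ne_of_adj h1⟩

lemma card_le_two_mul_image {V : Type*} [DecidableEq V] (P : Finset (V × V)) :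
    P.card ≤ 2 * (P.image fun q => s(q.1, q.2)).card := by
  refine Finset.card_le_mul_card_image _ 2 ?_
  intro b hb
  obtain ⟨q0, hq0, rfl⟩ := Finset.mem_image.mp hb
  have hsub : P.filter (fun q => s(q.1, q.2) = s(q0.1, q0.2)) ⊆ {q0, (q0.2, q0.1)} := by
    intro q hq
    simp only [Finset.mem_filter] at hq
    rcases Sym2.eq_iff.mp hq.2 with ⟨h1, h2⟩ | ⟨h1, h2⟩
    · simp only [Finset.mem_insert, Finset.mem_singleton]
      left
      exact Prod.ext h1 h2
    · simp only [Finset.mem_insert, Finset.mem_singleton]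
      right
      exact Prod.ext h1 h2
  exact (Finset.card_le_card hsub).trans ((Finset.card_insert_le _ _).trans (by simp))

lemma filter_adj_card {V : Type*} [Fintype V] [DecidableEq V] [Nonempty V]
    (G : SimpleGraph V) [DecidableRel G.Adj] (x : V) (T : Finset V) :
    (T.card : ℝ) - ((Fintype.card V : ℝ) - (G.minDegree : ℝ))
      ≤ ((T.filter (fun y => G.Adj x y)).card : ℝ) := by
  have h1 : (T.filter (fun y => G.Adj x y)).card + (T.filter (fun y => ¬ G.Adj x y)).card
      = T.card := Finset.card_filter_add_card_filter_not _
  have h2 : (T.filter (fun y => ¬ G.Adj x y)).card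
      ≤ ((Finset.univ : Finset V).filter (fun y => ¬ G.Adj x y)).card :=
    Finset.card_le_card (Finset.filter_subset_filter _ (Finset.subset_univ _))
  have h3 : ((Finset.univ : Finset V).filter (fun y => G.Adj x y)).card
      + ((Finset.univ : Finset V).filter (fun y => ¬ G.Adj x y)).card = Fintype.card V :=
    Finset.card_filter_add_card_filter_not _
  have h4 : ((Finset.univ : Finset V).filter (fun y => G.Adj x y)).card = G.degree x := by
    rw [← SimpleGraph.card_neighborFinset_eq_degree]
    congr 1
    ext y
    simp [SimpleGraph.mem_neighborFinset]
  have h5 : G.minDegree ≤ G.degree x := G.minDegree_le_degree x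
  have h2' := Nat.cast_le (α := ℝ) |>.mpr h2
  have h5' := Nat.cast_le (α := ℝ) |>.mpr h5
  have e1 : ((T.filter (fun y => G.Adj x y)).card : ℝ)
      + ((T.filter (fun y => ¬ G.Adj x y)).card : ℝ) = T.card := by exact_mod_cast h1
  have e3 : (G.degree x : ℝ) + (((Finset.univ : Finset V).filter (fun y => ¬ G.Adj x y)).card : ℝ)
      = Fintype.card V := by rw [← h4]; exact_mod_cast h3
  linarith

lemma pairs_card_ge {V : Type*} [Fintype V] [DecidableEq V]
    (G : SimpleGraph V) [DecidableRel G.Adj] (A T : Finset V) (c : ℝ)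
    (hc : ∀ x, c ≤ ((T.filter (fun y => G.Adj x y)).card : ℝ)) :
    (A.card : ℝ) * c ≤ (((A ×ˢ T).filter (fun q => G.Adj q.1 q.2)).card : ℝ) := by
  have hfib : ∀ x ∈ A, (((A ×ˢ T).filter (fun q => G.Adj q.1 q.2)).filter
      (fun q => q.1 = x)).card = (T.filter (fun y => G.Adj x y)).card := by
    intro x hx
    refine Finset.card_bij' (fun q _ => q.2) (fun y _ => (x, y)) ?_ ?_ ?_ ?_
    · intro q hq
      simp only [Finset.mem_filter, Finset.mem_product] at hq
      obtain ⟨⟨⟨-, hT⟩, hadj⟩, h1⟩ := hq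
      subst h1
      exact Finset.mem_filter.mpr ⟨hT, hadj⟩
    · intro y hy
      simp only [Finset.mem_filter] at hy ⊢
      simp [Finset.mem_product, hx, hy.1, hy.2]
    · intro q hq
      simp only [Finset.mem_filter] at hq
      exact Prod.ext hq.2.symm rfl
    · intro y _
      rfl
  have hsum : ((A ×ˢ T).filter (fun q => G.Adj q.1 q.2)).card
      = ∑ x ∈ A, (T.filter (fun y => G.Adj x y)).card := by
    rw [Finset.card_eq_sum_card_fiberwise (f := Prod.fst) (t := A)
      (fun q hq => (Finset.mem_product.mp (Finset.mem_filter.mp hq).1).1)]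
    exact Finset.sum_congr rfl hfib
  rw [hsum]
  push_cast
  calc (A.card : ℝ) * c = ∑ _x ∈ A, c := by rw [Finset.sum_const, nsmul_eq_mul]
    _ ≤ ∑ x ∈ A, ((T.filter (fun y => G.Adj x y)).card : ℝ) :=
        Finset.sum_le_sum fun x _ => hc x

lemma count_small_subsets {V : Type*} [Fintype V] [DecidableEq V] (W : Finset V)
    (hw : 1 ≤ W.card) (j : ℕ) :
    ((Finset.univ.filter (fun S : Finset V => S ⊆ W ∧ S.card ≤ j)).card)
      ≤ (W.card + 1) * W.card ^ j := by
  have h1 : Finset.univ.filter (fun S : Finset V => S ⊆ W ∧ S.card ≤ j)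
      = W.powerset.filter (fun S => S.card ≤ j) := by
    ext S; simp [Finset.mem_powerset]
  rw [h1, Finset.card_filter, Finset.sum_powerset_apply_card
    (f := fun m => if m ≤ j then 1 else 0)]
  have hterm : ∀ m ∈ Finset.range (W.card + 1),
      W.card.choose m • (if m ≤ j then 1 else 0) ≤ W.card ^ j := by
    intro m _
    by_cases hm : m ≤ j
    · simp only [hm, if_true, smul_eq_mul, mul_one]
      exact (Nat.choose_le_pow _ _).trans (Nat.pow_le_pow_right hw hm)
    · simp [hm]
  calc ∑ m ∈ Finset.range (W.card + 1), W.card.choose m • (if m ≤ j then 1 else 0)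
      ≤ (Finset.range (W.card + 1)).card • W.card ^ j :=
        Finset.sum_le_card_nsmul _ _ _ hterm
    _ = (W.card + 1) * W.card ^ j := by simp [mul_comm]

lemma exp_np1 (n : ℕ) (L : ℝ) (hn2 : 2 ≤ n) (hnL : (n:ℝ) = Real.exp L) :
    ((n:ℝ) + 1) ≤ Real.exp (2 * L) := by
  have hn2R : (2:ℝ) ≤ n := by exact_mod_cast hn2
  have : Real.exp (2 * L) = (n:ℝ) * n := by rw [hnL, ← Real.exp_add]; ring_nf
  nlinarith

lemma exp_term_bound1 (cnt k j w n : ℕ) (d L : ℝ) (hd : 1 ≤ d) (hL : 0 < L)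
    (hk1 : 1 ≤ k) (hjR : (j:ℝ) ≤ d * k) (hcnt : cnt ≤ (w + 1) * w ^ j)
    (hwn : (w:ℝ) ≤ n) (hn2 : 2 ≤ n) (hnL : (n:ℝ) = Real.exp L) :
    (cnt:ℝ) * Real.exp (-(83 * d * k * L)) ≤ Real.exp (-(80 * k * L)) := by
  have hk1R : (1:ℝ) ≤ (k:ℝ) := by exact_mod_cast hk1
  have hw0 : (0:ℝ) ≤ w := Nat.cast_nonneg w
  have h1 : (cnt:ℝ) ≤ ((n:ℝ) + 1) * (n:ℝ) ^ j := by
    calc (cnt:ℝ) ≤ ((w:ℝ) + 1) * (w:ℝ) ^ j := by exact_mod_cast hcnt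
      _ ≤ ((n:ℝ) + 1) * (n:ℝ) ^ j :=
        mul_le_mul (by linarith) (pow_le_pow_left₀ hw0 hwn j) (by positivity) (by linarith)
  have h2 : ((n:ℝ) + 1) * (n:ℝ) ^ j ≤ Real.exp (2 * L) * Real.exp (d * k * L) := by
    have ha := exp_np1 n L hn2 hnL
    have hb : (n:ℝ) ^ j ≤ Real.exp (d * (k:ℝ) * L) := by
      calc (n:ℝ) ^ j = Real.exp ((j:ℝ) * L) := by rw [hnL, ← Real.exp_nat_mul]
        _ ≤ Real.exp (d * (k:ℝ) * L) := Real.exp_le_exp.mpr (mul_le_mul_of_nonneg_right hjR hL.le)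
    exact mul_le_mul ha hb (by positivity) (Real.exp_nonneg _)
  calc (cnt:ℝ) * Real.exp (-(83 * d * k * L))
      ≤ (Real.exp (2 * L) * Real.exp (d * (k:ℝ) * L)) * Real.exp (-(83 * d * k * L)) :=
        mul_le_mul_of_nonneg_right (h1.trans h2) (Real.exp_nonneg _)
    _ = Real.exp (2 * L + d * (k:ℝ) * L + -(83 * d * k * L)) := by
        rw [← Real.exp_add, ← Real.exp_add]
    _ ≤ Real.exp (-(80 * k * L)) := by
        apply Real.exp_le_exp.mpr
        have hkL : L ≤ (k:ℝ) * L := by nlinarith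
        have hdkL : 82 * ((k:ℝ) * L) ≤ 82 * (d * ((k:ℝ) * L)) := by nlinarith
        nlinarith

lemma exp_term_bound2 (c mm n : ℕ) (L : ℝ) (hL : 0 < L) (hc : c ≤ n ^ mm)
    (hmm : 1 ≤ mm) (hnL : (n:ℝ) = Real.exp L) :
    (c:ℝ) * Real.exp (-(80 * mm * L)) ≤ Real.exp (-(79 * L)) := by
  have hmmR : (1:ℝ) ≤ (mm:ℝ) := by exact_mod_cast hmm
  have h1 : (c:ℝ) ≤ Real.exp ((mm:ℝ) * L) := by
    calc (c:ℝ) ≤ ((n ^ mm : ℕ) : ℝ) := by exact_mod_cast hc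
      _ = (n:ℝ) ^ mm := by push_cast; ring
      _ = Real.exp ((mm:ℝ) * L) := by rw [hnL, ← Real.exp_nat_mul]
  calc (c:ℝ) * Real.exp (-(80 * mm * L))
      ≤ Real.exp ((mm:ℝ) * L) * Real.exp (-(80 * mm * L)) :=
        mul_le_mul_of_nonneg_right h1 (Real.exp_nonneg _)
    _ = Real.exp ((mm:ℝ) * L + -(80 * mm * L)) := by rw [← Real.exp_add]
    _ ≤ Real.exp (-(79 * L)) := by
        apply Real.exp_le_exp.mpr
        nlinarith

lemma exp_term_bound3 (c t n : ℕ) (L : ℝ) (hL : 0 < L) (hc : c ≤ n ^ t * n ^ t)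
    (ht : 1 ≤ t) (hnL : (n:ℝ) = Real.exp L) :
    (c:ℝ) * Real.exp (-(187 * t * L)) ≤ Real.exp (-(77 * L)) := by
  have htR : (1:ℝ) ≤ (t:ℝ) := by exact_mod_cast ht
  have h1 : (c:ℝ) ≤ Real.exp (2 * (t:ℝ) * L) := by
    calc (c:ℝ) ≤ ((n ^ t * n ^ t : ℕ) : ℝ) := by exact_mod_cast hc
      _ = (n:ℝ) ^ t * (n:ℝ) ^ t := by push_cast; ring
      _ = Real.exp (2 * (t:ℝ) * L) := by
          rw [hnL, ← Real.exp_nat_mul, ← Real.exp_add]; ring_nf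
  calc (c:ℝ) * Real.exp (-(187 * t * L))
      ≤ Real.exp (2 * (t:ℝ) * L) * Real.exp (-(187 * t * L)) :=
        mul_le_mul_of_nonneg_right h1 (Real.exp_nonneg _)
    _ = Real.exp (2 * (t:ℝ) * L + -(187 * t * L)) := by rw [← Real.exp_add]
    _ ≤ Real.exp (-(77 * L)) := by
        apply Real.exp_le_exp.mpr
        nlinarith

end Helpers

/-- Expansion of random subgraphs of nearly complete graphs. The `p`-random
subgraph `G_p` is modelled by sampling independent Bernoulli(`p`) indicators
`f : Sym2 V → Bool` and keeping the edges of `G` whose indicator is `true`. -/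
theorem stmt_15 {V : Type*} [Fintype V] [Nonempty V] [DecidableEq V]
    (G : SimpleGraph V) [DecidableRel G.Adj] (n w : ℕ) (hn : 0 < n) (hw : 0 < w)
    (hcard : Fintype.card V = n) (W : Finset V) (hW : W.card = w)
    (d : ℝ) (hd : 1 ≤ d)
    (hδ : (n : ℝ) - w / (8 * d) ≤ (G.minDegree : ℝ))
    (p : ℝ) (hp0 : 0 ≤ p) (hp1 : p ≤ 1)
    (hp : 500 * d * Real.log n / w ≤ p) :
    (Measure.pi fun _ : Sym2 V =>
        (PMF.bernoulli (Real.toNNReal p) (Real.toNNReal_le_one.mpr hp1)).toMeasure)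
      {f : Sym2 V → Bool |
        (∀ X : Set V, 1 ≤ X.ncard → (X.ncard : ℝ) < w / (2 * d) →
          d * (X.ncard : ℝ) ≤
            (({y : V | y ∈ W ∧ ∃ x ∈ X,
              (G ⊓ SimpleGraph.fromEdgeSet {e | f e = true}).Adj x y}).ncard : ℝ)) ∧
        (∀ X Y : Set V, Disjoint X Y → w / (2 * d) ≤ (X.ncard : ℝ) →
          w / (2 * d) ≤ (Y.ncard : ℝ) →
          ∃ x ∈ X, ∃ y ∈ Y,
            (G ⊓ SimpleGraph.fromEdgeSet {e | f e = true}).Adj x y)} ≥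
      1 - ENNReal.ofReal ((n : ℝ) ^ (-(7 : ℝ))) := by
  classical
  by_cases hn1 : n ≤ 1
  · have hn1' : n = 1 := le_antisymm hn1 hn
    have : ((n : ℝ) ^ (-(7:ℝ))) = 1 := by
      rw [hn1']
      norm_num
    rw [this, ENNReal.ofReal_one, tsub_self]
    exact zero_le
  have hn2 : 2 ≤ n := by omega
  set μ : Measure (Sym2 V → Bool) := Measure.pi fun _ : Sym2 V =>
      (PMF.bernoulli (Real.toNNReal p) (Real.toNNReal_le_one.mpr hp1)).toMeasure with hμdef
  -- basic real facts
  set L : ℝ := Real.log n with hLdef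
  have hn1R : (1:ℝ) < n := by exact_mod_cast hn2
  have hL : 0 < L := Real.log_pos hn1R
  have hld2 : Real.log 2 ≤ L := Real.log_le_log (by norm_num) (by exact_mod_cast hn2)
  have hlog2 : (0.6931471803 : ℝ) < Real.log 2 := Real.log_two_gt_d9
  have hd0 : (0:ℝ) < d := lt_of_lt_of_le one_pos hd
  have hwR : (0:ℝ) < w := by exact_mod_cast hw
  have hwL : 500 * d * L ≤ w := by
    have h := hp.trans hp1
    rwa [div_le_one hwR] at h
  have hw300 : (300:ℝ) ≤ w := by nlinarith
  have hwn : (w:ℝ) ≤ n := by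
    have := Finset.card_le_univ W
    rw [hW, hcard] at this
    exact_mod_cast this
  have hnpos : (0:ℝ) < n := by linarith
  have hnL : (n:ℝ) = Real.exp L := (Real.exp_log hnpos).symm
  set m : ℝ := (w:ℝ) / (2 * d) with hmdef
  have hm0 : 0 < m := by positivity
  set t : ℕ := ⌈m⌉₊ with htdef
  have ht1 : 1 ≤ t := Nat.one_le_iff_ne_zero.mpr (by
    simp only [htdef, ne_eq, Nat.ceil_eq_zero, not_le]
    exact hm0)
  have htm : m ≤ (t:ℝ) := Nat.le_ceil m
  have hpL : 500 * d * L / w ≤ p := hp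
  have hp0' : 0 < p := lt_of_lt_of_le (by positivity) hpL
  -- the non-neighbor count bound
  have hnonadj : ((Fintype.card V : ℝ) - (G.minDegree : ℝ)) ≤ w / (8 * d) := by
    rw [hcard]; linarith
  -- events
  set Ev : Finset (Sym2 V) → Set (Sym2 V → Bool) :=
    fun E₀ => {f | ∀ e ∈ E₀, f e = false} with hEvdef
  set edges1 : Finset V → Finset V → Finset (Sym2 V) := fun A S =>
    ((A ×ˢ (W \ S)).filter (fun q => G.Adj q.1 q.2)).image (fun q => s(q.1, q.2)) with hedges1
  set edges2 : Finset V → Finset V → Finset (Sym2 V) := fun A B =>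
    ((A ×ˢ B).filter (fun q => G.Adj q.1 q.2)).image (fun q => s(q.1, q.2)) with hedges2
  set P1 : Finset V × Finset V → Prop := fun q =>
    q.1.Nonempty ∧ ((q.1.card : ℝ) < m) ∧ q.2 ⊆ W ∧ ((q.2.card : ℝ) < d * q.1.card) with hP1
  set idx1 : Finset (Finset V × Finset V) := Finset.univ.filter P1 with hidx1
  set idx2 : Finset (Finset V × Finset V) := Finset.univ.filter
    (fun q => q.1.card = t ∧ q.2.card = t ∧ Disjoint q.1 q.2) with hidx2
  set Good : Set (Sym2 V → Bool) := {f : Sym2 V → Bool |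
        (∀ X : Set V, 1 ≤ X.ncard → (X.ncard : ℝ) < w / (2 * d) →
          d * (X.ncard : ℝ) ≤
            (({y : V | y ∈ W ∧ ∃ x ∈ X,
              (G ⊓ SimpleGraph.fromEdgeSet {e | f e = true}).Adj x y}).ncard : ℝ)) ∧
        (∀ X Y : Set V, Disjoint X Y → w / (2 * d) ≤ (X.ncard : ℝ) →
          w / (2 * d) ≤ (Y.ncard : ℝ) →
          ∃ x ∈ X, ∃ y ∈ Y,
            (G ⊓ SimpleGraph.fromEdgeSet {e | f e = true}).Adj x y)} with hGood
  -- covering of the bad event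
  have hcover : Goodᶜ ⊆ (⋃ q ∈ idx1, Ev (edges1 q.1 q.2)) ∪ (⋃ q ∈ idx2, Ev (edges2 q.1 q.2)) := by
    intro f hf
    rw [Set.mem_compl_iff, hGood, Set.mem_setOf_eq, not_and_or] at hf
    rcases hf with hf | hf
    · push_neg at hf
      obtain ⟨X, hX1, hXm, hXN⟩ := hf
      left
      set N : Set V := {y : V | y ∈ W ∧ ∃ x ∈ X,
        (G ⊓ SimpleGraph.fromEdgeSet {e | f e = true}).Adj x y} with hNdef
      have hXfin : X.Finite := Set.toFinite X
      have hNfin : N.Finite := Set.toFinite N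
      set A : Finset V := hXfin.toFinset with hAdef
      set S : Finset V := hNfin.toFinset with hSdef
      have hAcard : A.card = X.ncard := (Set.ncard_eq_toFinset_card X hXfin).symm
      have hScard : S.card = N.ncard := (Set.ncard_eq_toFinset_card N hNfin).symm
      have hq1 : (A, S) ∈ idx1 := by
        rw [hidx1, Finset.mem_filter]
        refine ⟨Finset.mem_univ _, ?_, ?_, ?_, ?_⟩
        · rw [← Finset.card_pos, hAcard]; omega
        · rw [hAcard]; exact hXm
        · intro y hy
          have : y ∈ N := hNfin.mem_toFinset.mp hy
          exact this.1
        · rw [hAcard, hScard]; exact hXN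
      refine Set.mem_iUnion₂.mpr ⟨(A, S), hq1, ?_⟩
      intro e he
      simp only [hedges1, Finset.mem_image, Finset.mem_filter, Finset.mem_product] at he
      obtain ⟨⟨x, y⟩, ⟨⟨hxA, hyT⟩, hadj⟩, rfl⟩ := he
      by_contra hftrue
      rw [Bool.not_eq_false] at hftrue
      have hyW : y ∈ W := (Finset.mem_sdiff.mp hyT).1
      have hyS : y ∉ S := (Finset.mem_sdiff.mp hyT).2
      have hxX : x ∈ X := hXfin.mem_toFinset.mp hxA
      have : y ∈ N := ⟨hyW, x, hxX, (adj_char G f x y).mpr ⟨hadj, hftrue⟩⟩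
      exact hyS (hNfin.mem_toFinset.mpr this)
    · push_neg at hf
      obtain ⟨X, Y, hdisj, hXm, hYm, hno⟩ := hf
      right
      have hXfin : X.Finite := Set.toFinite X
      have hYfin : Y.Finite := Set.toFinite Y
      have htX : t ≤ hXfin.toFinset.card := by
        rw [← Set.ncard_eq_toFinset_card X hXfin]
        exact Nat.ceil_le.mpr hXm
      have htY : t ≤ hYfin.toFinset.card := by
        rw [← Set.ncard_eq_toFinset_card Y hYfin]
        exact Nat.ceil_le.mpr hYm
      obtain ⟨A, hAsub, hAcard⟩ := Finset.exists_subset_card_eq htX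
      obtain ⟨B, hBsub, hBcard⟩ := Finset.exists_subset_card_eq htY
      have hABdisj : Disjoint A B := by
        rw [Finset.disjoint_left]
        intro a haA haB
        exact Set.disjoint_left.mp hdisj
          (hXfin.mem_toFinset.mp (hAsub haA)) (hYfin.mem_toFinset.mp (hBsub haB))
      have hq2 : (A, B) ∈ idx2 := by
        rw [hidx2, Finset.mem_filter]
        exact ⟨Finset.mem_univ _, hAcard, hBcard, hABdisj⟩
      refine Set.mem_iUnion₂.mpr ⟨(A, B), hq2, ?_⟩
      intro e he
      simp only [hedges2, Finset.mem_image, Finset.mem_filter, Finset.mem_product] at he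
      obtain ⟨⟨x, y⟩, ⟨⟨hxA, hyB⟩, hadj⟩, rfl⟩ := he
      by_contra hftrue
      rw [Bool.not_eq_false] at hftrue
      exact hno x (hXfin.mem_toFinset.mp (hAsub hxA)) y (hYfin.mem_toFinset.mp (hBsub hyB))
        ((adj_char G f x y).mpr ⟨hadj, hftrue⟩)
  -- per-event bound for idx1
  have hev1 : ∀ q ∈ idx1, μ (Ev (edges1 q.1 q.2))
      ≤ ENNReal.ofReal (Real.exp (-(83 * d * q.1.card * L))) := by
    rintro ⟨A, S⟩ hq
    rw [hidx1, Finset.mem_filter] at hq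
    obtain ⟨-, hA, hAm, hSW, hSc⟩ := hq
    set k : ℕ := A.card with hkdef
    have hk1 : 1 ≤ k := Finset.card_pos.mpr hA
    have hk1R : (1:ℝ) ≤ k := by exact_mod_cast hk1
    -- lower bound on the number of edges
    have hT : ((W \ S).card : ℝ) = (w:ℝ) - S.card := by
      rw [Finset.card_sdiff_of_subset hSW, hW]
      have : S.card ≤ w := hW ▸ Finset.card_le_card hSW
      push_cast [Nat.cast_sub this]
      ring
    have hdk : d * (k:ℝ) < (w:ℝ) / 2 := by
      have := (mul_lt_mul_iff_right₀ hd0).mpr hAm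
      calc d * (k:ℝ) < d * m := this
        _ = w / 2 := by rw [hmdef]; field_simp
    have hc : ∀ x : V, (3*(w:ℝ)/8) ≤ (((W \ S).filter (fun y => G.Adj x y)).card : ℝ) := by
      intro x
      have h1 := filter_adj_card G x (W \ S)
      have h2 : (w:ℝ) / (8 * d) ≤ w / 8 := by
        apply div_le_div_of_nonneg_left (le_of_lt hwR) (by norm_num)
        nlinarith
      have : ((W \ S).card : ℝ) - w / (8*d) ≤ (((W \ S).filter (fun y => G.Adj x y)).card : ℝ) := by
        linarith [hnonadj]
      rw [hT] at this
      nlinarith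
    have hpairs := pairs_card_ge G A (W \ S) (3*(w:ℝ)/8) hc
    have himg := card_le_two_mul_image ((A ×ˢ (W \ S)).filter (fun q => G.Adj q.1 q.2))
    have himgR : ((((A ×ˢ (W \ S)).filter (fun q => G.Adj q.1 q.2)).card : ℝ))
        ≤ 2 * ((edges1 A S).card : ℝ) := by
      rw [hedges1]
      exact_mod_cast himg
    have hE1 : (k:ℝ) * (3*w/16) ≤ ((edges1 A S).card : ℝ) := by nlinarith [hpairs, himgR]
    -- probability bound
    have hcount : 83 * d * (k:ℝ) * L ≤ p * ((edges1 A S).card : ℝ) := by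
      have h1 : (500 * d * L / w) * ((k:ℝ) * (3*w/16)) ≤ p * ((edges1 A S).card : ℝ) := by
        apply mul_le_mul hpL hE1 (mul_nonneg (by linarith) (by linarith)) (le_of_lt hp0')
      have h2 : (500 * d * L / w) * ((k:ℝ) * (3*w/16)) = 93.75 * (d * k * L) := by
        field_simp; ring
      nlinarith [mul_pos (mul_pos hd0 (lt_of_lt_of_le one_pos hk1R)) hL]
    calc μ (Ev (edges1 A S)) ≤ ENNReal.ofReal (Real.exp (-(p * ((edges1 A S).card : ℝ)))) :=
          cyl_measure p hp0 _ _
      _ ≤ ENNReal.ofReal (Real.exp (-(83 * d * (k:ℝ) * L))) := by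
          apply ENNReal.ofReal_le_ofReal
          apply Real.exp_le_exp.mpr
          linarith
  -- per-event bound for idx2
  have hev2 : ∀ q ∈ idx2, μ (Ev (edges2 q.1 q.2))
      ≤ ENNReal.ofReal (Real.exp (-(187 * t * L))) := by
    rintro ⟨A, B⟩ hq
    rw [hidx2, Finset.mem_filter] at hq
    obtain ⟨-, hAt, hBt, hAB⟩ := hq
    have ht0R : (0:ℝ) < t := by exact_mod_cast ht1
    have hwm : (w:ℝ) / (8 * d) = m / 4 := by
      rw [hmdef, div_div]
      congr 1
      ring
    have hc : ∀ x : V, (3 * (t:ℝ)/4) ≤ ((B.filter (fun y => G.Adj x y)).card : ℝ) := by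
      intro x
      have h1 := filter_adj_card G x B
      have : ((B.card:ℝ)) - w/(8*d) ≤ ((B.filter (fun y => G.Adj x y)).card : ℝ) := by
        linarith [hnonadj]
      rw [hBt, hwm] at this
      linarith [htm]
    have hpairs := pairs_card_ge G A B (3 * (t:ℝ)/4) hc
    -- injectivity
    have hinj : Set.InjOn (fun q : V × V => s(q.1, q.2))
        ((A ×ˢ B).filter (fun q => G.Adj q.1 q.2)) := by
      rintro ⟨x, y⟩ hxy ⟨x', y'⟩ hxy' hs
      simp only [Finset.coe_filter, Set.mem_setOf_eq, Finset.mem_product] at hxy hxy'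
      rcases Sym2.eq_iff.mp hs with ⟨h1, h2⟩ | ⟨h1, h2⟩
      · exact Prod.ext h1 h2
      · exfalso
        have hxA : (x, y).1 ∈ A := hxy.1.1
        have hy'B : (x', y').2 ∈ B := hxy'.1.2
        rw [h1] at hxA
        exact (Finset.disjoint_left.mp hAB hxA) hy'B
    have hEcard : (edges2 A B).card = ((A ×ˢ B).filter (fun q => G.Adj q.1 q.2)).card := by
      rw [hedges2]
      exact Finset.card_image_of_injOn hinj
    have hE2 : (t:ℝ) * (3 * (t:ℝ)/4) ≤ ((edges2 A B).card : ℝ) := by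
      rw [hEcard]
      calc (t:ℝ) * (3 * (t:ℝ)/4) = (A.card : ℝ) * (3 * (t:ℝ)/4) := by rw [hAt]
        _ ≤ _ := hpairs
    have hcount : 187 * (t:ℝ) * L ≤ p * ((edges2 A B).card : ℝ) := by
      have h1 : (500 * d * L / w) * ((t:ℝ) * (3 * (t:ℝ)/4)) ≤ p * ((edges2 A B).card : ℝ) :=
        mul_le_mul hpL hE2 (by positivity) (le_of_lt hp0')
      have htm' : (w:ℝ)/(2*d) ≤ t := htm
      have h2 : 187.5 * (t:ℝ) * L ≤ (500 * d * L / w) * ((t:ℝ) * (3 * (t:ℝ)/4)) := by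
        rw [div_mul_eq_mul_div, le_div_iff₀ hwR]
        have hw2dt : (w:ℝ) ≤ 2 * d * t := by
          rw [div_le_iff₀ (by positivity : (0:ℝ) < 2 * d)] at htm'
          linarith
        nlinarith [mul_le_mul_of_nonneg_left hw2dt
          (by positivity : (0:ℝ) ≤ 187.5 * (t:ℝ) * L)]
      linarith [mul_pos ht0R hL]
    calc μ (Ev (edges2 A B)) ≤ ENNReal.ofReal (Real.exp (-(p * ((edges2 A B).card : ℝ)))) :=
          cyl_measure p hp0 _ _
      _ ≤ ENNReal.ofReal (Real.exp (-(187 * (t:ℝ) * L))) := by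
          apply ENNReal.ofReal_le_ofReal
          apply Real.exp_le_exp.mpr
          linarith
  -- real sum bound for idx1
  have hreal1 : (∑ q ∈ idx1, Real.exp (-(83 * d * (q.1.card:ℝ) * L))) ≤ Real.exp (-(77 * L)) := by
    have hstep1 : (∑ q ∈ idx1, Real.exp (-(83 * d * (q.1.card:ℝ) * L)))
        = ∑ A : Finset V, ∑ S : Finset V,
            (if P1 (A, S) then Real.exp (-(83 * d * (A.card:ℝ) * L)) else 0) := by
      rw [hidx1, Finset.sum_filter, ← Finset.univ_product_univ, Finset.sum_product]
    rw [hstep1]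
    have hinner : ∀ A : Finset V,
        (∑ S : Finset V, (if P1 (A, S) then Real.exp (-(83 * d * (A.card:ℝ) * L)) else 0))
          ≤ (if 1 ≤ A.card then Real.exp (-(80 * (A.card:ℝ) * L)) else 0) := by
      intro A
      by_cases hA : A.Nonempty ∧ ((A.card : ℝ) < m)
      · have hk1 : 1 ≤ A.card := Finset.card_pos.mpr hA.1
        have hjR : ((⌊d * (A.card:ℝ)⌋₊ : ℕ) : ℝ) ≤ d * (A.card:ℝ) := Nat.floor_le (mul_nonneg hd0.le (Nat.cast_nonneg _))
        have hsub : Finset.univ.filter (fun S : Finset V => P1 (A, S))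
            ⊆ Finset.univ.filter
              (fun S : Finset V => S ⊆ W ∧ S.card ≤ ⌊d * (A.card:ℝ)⌋₊) := by
          intro S hS
          rw [Finset.mem_filter] at hS ⊢
          refine ⟨Finset.mem_univ _, hS.2.2.2.1, Nat.le_floor (le_of_lt hS.2.2.2.2)⟩
        have hLHS : (∑ S : Finset V,
              (if P1 (A, S) then Real.exp (-(83 * d * (A.card:ℝ) * L)) else 0))
            ≤ ((Finset.univ.filter
                (fun S : Finset V => S ⊆ W ∧ S.card ≤ ⌊d * (A.card:ℝ)⌋₊)).card : ℝ)
              * Real.exp (-(83 * d * (A.card:ℝ) * L)) := by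
          rw [← Finset.sum_filter]
          calc (∑ S ∈ Finset.univ.filter (fun S : Finset V => P1 (A, S)),
                Real.exp (-(83 * d * (A.card:ℝ) * L)))
              ≤ ∑ S ∈ Finset.univ.filter
                  (fun S : Finset V => S ⊆ W ∧ S.card ≤ ⌊d * (A.card:ℝ)⌋₊),
                Real.exp (-(83 * d * (A.card:ℝ) * L)) :=
              Finset.sum_le_sum_of_subset_of_nonneg hsub (fun _ _ _ => Real.exp_nonneg _)
            _ = _ := by rw [Finset.sum_const, nsmul_eq_mul]
        have hcnt : (Finset.univ.filter
              (fun S : Finset V => S ⊆ W ∧ S.card ≤ ⌊d * (A.card:ℝ)⌋₊)).card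
            ≤ (w + 1) * w ^ ⌊d * (A.card:ℝ)⌋₊ := by
          have := count_small_subsets W (by omega) ⌊d * (A.card:ℝ)⌋₊
          rwa [hW] at this
        rw [if_pos hk1]
        exact hLHS.trans (exp_term_bound1 _ _ _ _ _ d L hd hL hk1 hjR hcnt hwn hn2 hnL)
      · have hzero : (∑ S : Finset V,
            (if P1 (A, S) then Real.exp (-(83 * d * (A.card:ℝ) * L)) else 0)) = 0 := by
          apply Finset.sum_eq_zero
          intro S _
          rw [if_neg]
          intro hP
          exact hA ⟨hP.1, hP.2.1⟩
        rw [hzero]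
        by_cases h1 : 1 ≤ A.card
        · rw [if_pos h1]; exact Real.exp_nonneg _
        · rw [if_neg h1]
    calc (∑ A : Finset V, ∑ S : Finset V,
          (if P1 (A, S) then Real.exp (-(83 * d * (A.card:ℝ) * L)) else 0))
        ≤ ∑ A : Finset V, (if 1 ≤ A.card then Real.exp (-(80 * (A.card:ℝ) * L)) else 0) :=
          Finset.sum_le_sum (fun A _ => hinner A)
      _ = ∑ mm ∈ Finset.range (n + 1), n.choose mm •
            (if 1 ≤ mm then Real.exp (-(80 * (mm:ℝ) * L)) else 0) := by
          rw [← Finset.powerset_univ, Finset.sum_powerset_apply_card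
            (f := fun mm => if 1 ≤ mm then Real.exp (-(80 * (mm:ℝ) * L)) else 0),
            Finset.card_univ, hcard]
      _ ≤ (Finset.range (n + 1)).card • Real.exp (-(79 * L)) := by
          apply Finset.sum_le_card_nsmul
          intro mm _
          by_cases hmm : 1 ≤ mm
          · rw [if_pos hmm, nsmul_eq_mul]
            exact exp_term_bound2 (n.choose mm) mm n L hL (Nat.choose_le_pow n mm) hmm hnL
          · rw [if_neg hmm]
            simp [Real.exp_nonneg]
      _ ≤ Real.exp (-(77 * L)) := by
          rw [Finset.card_range, nsmul_eq_mul]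
          have hnp1 := exp_np1 n L hn2 hnL
          calc ((n + 1 : ℕ) : ℝ) * Real.exp (-(79 * L))
              ≤ Real.exp (2 * L) * Real.exp (-(79 * L)) := by
                apply mul_le_mul_of_nonneg_right _ (Real.exp_nonneg _)
                push_cast
                linarith
            _ = Real.exp (2 * L + -(79 * L)) := by rw [← Real.exp_add]
            _ ≤ Real.exp (-(77 * L)) := Real.exp_le_exp.mpr (by linarith)
  have hsum1 : μ (⋃ q ∈ idx1, Ev (edges1 q.1 q.2)) ≤ ENNReal.ofReal (Real.exp (-(77 * L))) := by
    calc μ (⋃ q ∈ idx1, Ev (edges1 q.1 q.2)) ≤ ∑ q ∈ idx1, μ (Ev (edges1 q.1 q.2)) :=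
          measure_biUnion_finset_le _ _
      _ ≤ ∑ q ∈ idx1, ENNReal.ofReal (Real.exp (-(83 * d * (q.1.card:ℝ) * L))) :=
          Finset.sum_le_sum hev1
      _ = ENNReal.ofReal (∑ q ∈ idx1, Real.exp (-(83 * d * (q.1.card:ℝ) * L))) :=
          (ENNReal.ofReal_sum_of_nonneg (fun _ _ => Real.exp_nonneg _)).symm
      _ ≤ ENNReal.ofReal (Real.exp (-(77 * L))) := ENNReal.ofReal_le_ofReal hreal1
  -- sum over idx2
  have hidxcard : idx2.card ≤ (n.choose t) * (n.choose t) := by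
    have hsub : idx2 ⊆ (Finset.powersetCard t (Finset.univ : Finset V))
        ×ˢ (Finset.powersetCard t (Finset.univ : Finset V)) := by
      intro q hq
      rw [hidx2, Finset.mem_filter] at hq
      rw [Finset.mem_product, Finset.mem_powersetCard_univ, Finset.mem_powersetCard_univ]
      exact ⟨hq.2.1, hq.2.2.1⟩
    have := Finset.card_le_card hsub
    rwa [Finset.card_product, Finset.card_powersetCard, Finset.card_univ, hcard] at this
  have hreal2 : ((idx2.card : ℕ) : ℝ) * Real.exp (-(187 * (t:ℝ) * L)) ≤ Real.exp (-(77 * L)) := by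
    refine exp_term_bound3 idx2.card t n L hL ?_ ht1 hnL
    exact hidxcard.trans (Nat.mul_le_mul (Nat.choose_le_pow n t) (Nat.choose_le_pow n t))
  have hsum2 : μ (⋃ q ∈ idx2, Ev (edges2 q.1 q.2)) ≤ ENNReal.ofReal (Real.exp (-(77 * L))) := by
    calc μ (⋃ q ∈ idx2, Ev (edges2 q.1 q.2)) ≤ ∑ q ∈ idx2, μ (Ev (edges2 q.1 q.2)) :=
          measure_biUnion_finset_le _ _
      _ ≤ ∑ q ∈ idx2, ENNReal.ofReal (Real.exp (-(187 * (t:ℝ) * L))) :=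
          Finset.sum_le_sum hev2
      _ = idx2.card • ENNReal.ofReal (Real.exp (-(187 * (t:ℝ) * L))) := by
          rw [Finset.sum_const]
      _ = ENNReal.ofReal ((idx2.card : ℝ) * Real.exp (-(187 * (t:ℝ) * L))) := by
          rw [nsmul_eq_mul, ← ENNReal.ofReal_natCast idx2.card,
            ← ENNReal.ofReal_mul (Nat.cast_nonneg _)]
      _ ≤ ENNReal.ofReal (Real.exp (-(77 * L))) := ENNReal.ofReal_le_ofReal hreal2
  -- total bad bound
  have hbad : μ Goodᶜ ≤ ENNReal.ofReal ((n:ℝ) ^ (-(7:ℝ))) := by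
    have h1 : μ Goodᶜ ≤ ENNReal.ofReal (Real.exp (-(77*L))) + ENNReal.ofReal (Real.exp (-(77*L))) :=
      le_trans (measure_mono hcover)
        (le_trans (measure_union_le _ _) (add_le_add hsum1 hsum2))
    have h2 : ENNReal.ofReal (Real.exp (-(77*L))) + ENNReal.ofReal (Real.exp (-(77*L)))
        = ENNReal.ofReal (2 * Real.exp (-(77*L))) := by
      rw [← ENNReal.ofReal_add (Real.exp_nonneg _) (Real.exp_nonneg _)]
      ring_nf
    have h3 : 2 * Real.exp (-(77*L)) ≤ (n:ℝ) ^ (-(7:ℝ)) := by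
      rw [Real.rpow_def_of_pos hnpos]
      have hexp : Real.log (n:ℝ) * (-(7:ℝ)) = -(7*L) := by rw [← hLdef]; ring
      rw [hexp]
      have h2' : (2:ℝ) ≤ Real.exp (70 * L) := by
        calc (2:ℝ) = Real.exp (Real.log 2) := (Real.exp_log (by norm_num)).symm
          _ ≤ Real.exp (70 * L) := Real.exp_le_exp.mpr (by nlinarith)
      calc 2 * Real.exp (-(77*L)) ≤ Real.exp (70*L) * Real.exp (-(77*L)) :=
            mul_le_mul_of_nonneg_right h2' (Real.exp_nonneg _)
        _ = Real.exp (-(7*L)) := by rw [← Real.exp_add]; ring_nf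
    calc μ Goodᶜ ≤ ENNReal.ofReal (2 * Real.exp (-(77*L))) := h2 ▸ h1
      _ ≤ ENNReal.ofReal ((n:ℝ) ^ (-(7:ℝ))) := ENNReal.ofReal_le_ofReal h3
  -- conclude
  haveI hprob : IsProbabilityMeasure μ := by
    rw [hμdef]
    infer_instance
  rw [ge_iff_le, tsub_le_iff_right]
  calc (1 : ENNReal) = μ Set.univ := measure_univ.symm
    _ = μ (Good ∪ Goodᶜ) := by rw [Set.union_compl_self]
    _ ≤ μ Good + μ Goodᶜ := measure_union_le _ _
    _ ≤ μ Good + ENNReal.ofReal ((n:ℝ) ^ (-(7:ℝ))) := add_le_add_right hbad _
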